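/- arXiv:2303.00565 — 2 statements merged into one kernel-verified Lean document; each statement's English description precedes it below -/
import Mathlib

section
/- Let f₁, …, f_N : ℝ^d → ℝ be differentiable with L-Lipschitz gradients and set f = (1/N) Σ_{i=1}^N f_i. Let x ∈ ℝ^d with ∇f(x) ≠ 0, let ρ ≥ 0, γ ≥ 0, α > 0, ε > 0, and let η ∈ ℝ^d satisfy 0 ≤ η_j ≤ 1/ε for every coordinate j. Then ⟨∇f(x), −(γ/N) Σ_{i=1}^N ∇f_i(x + ρ ∇f(x)/‖∇f(x)‖) ⊙ η⟩ ≤ −γ ‖∇f(x) ⊙ √η‖² + (γ/(2α²)) ‖∇f(x) ⊙ √η‖² + γ α² L² ρ²/(2ε). -/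
open scoped RealInnerProductSpace

set_option maxHeartbeats 1000000

/-- The coordinatewise (Hadamard) product on `EuclideanSpace ℝ (Fin d)`. -/
noncomputable def had {d : ℕ} (x y : EuclideanSpace ℝ (Fin d)) : EuclideanSpace ℝ (Fin d) :=
  (WithLp.equiv 2 (Fin d → ℝ)).symm (fun j => x j * y j)

/-- The coordinatewise square root on `EuclideanSpace ℝ (Fin d)`. -/
noncomputable def vsqrt {d : ℕ} (x : EuclideanSpace ℝ (Fin d)) : EuclideanSpace ℝ (Fin d) :=
  (WithLp.equiv 2 (Fin d → ℝ)).symm (fun j => Real.sqrt (x j))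

lemma euclid_sum_apply {d N : ℕ} (w : Fin N → EuclideanSpace ℝ (Fin d)) (j : Fin d) :
    (∑ i, w i) j = ∑ i, w i j := by
  induction (Finset.univ : Finset (Fin N)) using Finset.induction with
  | empty => simp
  | @insert a s h ih => rw [Finset.sum_insert h, Finset.sum_insert h, ← ih]; rfl

lemma euclid_norm_sq {d : ℕ} (u : EuclideanSpace ℝ (Fin d)) : ‖u‖ ^ 2 = ∑ j, (u j) ^ 2 := by
  rw [← real_inner_self_eq_norm_sq]
  rw [PiLp.inner_apply]; simp [RCLike.inner_apply, sq]

lemma young_aux (a dd e α : ℝ) (hα : 0 < α) (he : 0 ≤ e) :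
    -(a * e * dd) ≤ a ^ 2 * e / (2 * α ^ 2) + α ^ 2 * (e * dd ^ 2) / 2 := by
  have hα2 : (0:ℝ) < α ^ 2 := by positivity
  have h := mul_nonneg he (sq_nonneg (a / α + α * dd))
  have heq : e * (a / α + α * dd) ^ 2 = a ^ 2 * e / α ^ 2 + 2 * (a * e * dd) + α ^ 2 * (e * dd ^ 2) := by
    field_simp; ring
  have h2 : a ^ 2 * e / (2 * α ^ 2) = (a ^ 2 * e / α ^ 2) / 2 := by ring
  rw [heq] at h
  linarith

/-- Full-batch descent estimate for the SAM gradient step: with `f = (1/N) Σ f_i`, `f_i`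
having `L`-Lipschitz gradients, and `η` coordinatewise in `[0, 1/ε]`,
`⟨∇f(x), −(γ/N) Σ_i ∇f_i(x + ρ∇f(x)/‖∇f(x)‖) ⊙ η⟩
  ≤ −γ‖∇f(x) ⊙ √η‖² + (γ/(2α²))‖∇f(x) ⊙ √η‖² + γα²L²ρ²/(2ε)`. -/
theorem sam_descent_inner_bound {d N : ℕ} (hd : 1 ≤ d) (hN : 1 ≤ N)
    (fi : Fin N → EuclideanSpace ℝ (Fin d) → ℝ)
    (f : EuclideanSpace ℝ (Fin d) → ℝ)
    (hfdef : ∀ y, f y = (1 / (N : ℝ)) * ∑ i, fi i y)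
    (L : ℝ)
    (hfi : ∀ i, Differentiable ℝ (fi i))
    (hfiL : ∀ i, ∀ u v, ‖gradient (fi i) u - gradient (fi i) v‖ ≤ L * ‖u - v‖)
    (x : EuclideanSpace ℝ (Fin d)) (hx : gradient f x ≠ 0)
    (ρ γ α ε : ℝ) (hρ : 0 ≤ ρ) (hγ : 0 ≤ γ) (hα : 0 < α) (hε : 0 < ε)
    (η : EuclideanSpace ℝ (Fin d)) (hη : ∀ j, 0 ≤ η j ∧ η j ≤ 1 / ε) :
    ⟪gradient f x,
        -((γ / (N : ℝ)) • ∑ i,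
          had (gradient (fi i) (x + (ρ / ‖gradient f x‖) • gradient f x)) η)⟫
      ≤ -γ * ‖had (gradient f x) (vsqrt η)‖ ^ 2
        + γ / (2 * α ^ 2) * ‖had (gradient f x) (vsqrt η)‖ ^ 2
        + γ * α ^ 2 * L ^ 2 * ρ ^ 2 / (2 * ε) := by
  have hNpos : (0:ℝ) < N := by exact_mod_cast hN
  have hgrad : ∀ z, gradient f z = (1/(N:ℝ)) • ∑ i, gradient (fi i) z := by
    intro z
    have hD : HasFDerivAt (fun y => ∑ i, fi i y) (∑ i, fderiv ℝ (fi i) z) z :=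
      HasFDerivAt.fun_sum (fun i _ => (hfi i z).hasFDerivAt)
    have hF : HasFDerivAt f ((1/(N:ℝ)) • ∑ i, fderiv ℝ (fi i) z) z := by
      have := hD.const_mul (1/(N:ℝ))
      simpa [funext hfdef] using this
    have := hF.hasGradientAt.gradient
    rw [this, map_smul, map_sum]
    simp [gradient]
  set g := gradient f x with hgdef
  set y := x + (ρ / ‖g‖) • g with hydef
  set Gi : Fin N → EuclideanSpace ℝ (Fin d) := fun i => gradient (fi i) y with hGidef
  set G : EuclideanSpace ℝ (Fin d) := (1/(N:ℝ)) • ∑ i, Gi i with hGdef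
  have hgpos : (0:ℝ) < ‖g‖ := norm_pos_iff.mpr hx
  have hyx : ‖y - x‖ = ρ := by
    have : y - x = (ρ / ‖g‖) • g := by rw [hydef]; abel
    rw [this, norm_smul, Real.norm_eq_abs, abs_of_nonneg (div_nonneg hρ (norm_nonneg g))]
    field_simp
  -- bound on ‖G - g‖
  have hGg : ‖G - g‖ ≤ L * ρ := by
    have hsub : G - g = (1/(N:ℝ)) • ∑ i, (Gi i - gradient (fi i) x) := by
      rw [hGdef, hgdef, hgrad x, ← smul_sub, ← Finset.sum_sub_distrib]
    rw [hsub, norm_smul]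
    have h1 : ‖∑ i, (Gi i - gradient (fi i) x)‖ ≤ ∑ _i : Fin N, (L * ρ) := by
      refine (norm_sum_le _ _).trans (Finset.sum_le_sum fun i _ => ?_)
      simpa [hyx] using hfiL i y x
    have h2 : ∑ _i : Fin N, (L * ρ) = (N:ℝ) * (L * ρ) := by
      simp [Finset.sum_const, mul_comm]
    rw [h2] at h1
    have habs : ‖1/(N:ℝ)‖ = 1/(N:ℝ) := by
      rw [Real.norm_eq_abs]; exact abs_of_pos (by positivity)
    rw [habs]
    calc (1/(N:ℝ)) * ‖∑ i, (Gi i - gradient (fi i) x)‖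
        ≤ (1/(N:ℝ)) * ((N:ℝ) * (L * ρ)) := by
          exact mul_le_mul_of_nonneg_left h1 (by positivity)
      _ = L * ρ := by field_simp
  have hGg2 : ‖G - g‖ ^ 2 ≤ L ^ 2 * ρ ^ 2 := by
    have := pow_le_pow_left₀ (norm_nonneg (G - g)) hGg 2
    calc ‖G - g‖ ^ 2 ≤ (L * ρ) ^ 2 := this
      _ = L ^ 2 * ρ ^ 2 := by ring
  -- coordinate descriptions
  have hGj : ∀ j, G j = (1/(N:ℝ)) * ∑ i, Gi i j := by
    intro j
    rw [hGdef]
    show (1/(N:ℝ)) * (∑ i, Gi i) j = _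
    rw [euclid_sum_apply]
  set A := ‖had g (vsqrt η)‖ ^ 2 with hAdef
  have hA : A = ∑ j, (g j) ^ 2 * η j := by
    rw [hAdef, euclid_norm_sq]
    refine Finset.sum_congr rfl fun j _ => ?_
    show (g j * Real.sqrt (η j)) ^ 2 = _
    rw [mul_pow, Real.sq_sqrt (hη j).1]
  have hD2 : ‖G - g‖ ^ 2 = ∑ j, (G j - g j) ^ 2 := by
    rw [euclid_norm_sq]
    refine Finset.sum_congr rfl fun j _ => rfl
  -- rewrite LHS
  have hLHS : ⟪g, -((γ / (N : ℝ)) • ∑ i, had (Gi i) η)⟫ = ∑ j, -(γ * (g j * η j * G j)) := by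
    rw [PiLp.inner_apply]
    refine Finset.sum_congr rfl fun j _ => ?_
    have hv : (-((γ / (N : ℝ)) • ∑ i, had (Gi i) η)) j
        = -((γ/(N:ℝ)) * ∑ i, (Gi i j * η j)) := by
      have hs : (∑ i, had (Gi i) η) j = ∑ i, (Gi i j * η j) := euclid_sum_apply _ j
      simp [hs]
    rw [RCLike.inner_apply, hv, hGj j, ← Finset.sum_mul]
    simp only [starRingEnd_apply, star_trivial]
    ring
  rw [hLHS]
  -- per-coordinate bound
  have hcoord : ∀ j : Fin d, (g j) ^ 2 * η j - (g j) ^ 2 * η j / (2 * α ^ 2)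
      - α ^ 2 * (G j - g j) ^ 2 / (2 * ε) ≤ g j * η j * G j := by
    intro j
    obtain ⟨h0, h1⟩ := hη j
    have hy := young_aux (g j) (G j - g j) (η j) α hα h0
    have hdd : η j * (G j - g j) ^ 2 ≤ (1/ε) * (G j - g j) ^ 2 :=
      mul_le_mul_of_nonneg_right h1 (sq_nonneg _)
    have hdd2 : α ^ 2 * (η j * (G j - g j) ^ 2) / 2 ≤ α ^ 2 * (G j - g j) ^ 2 / (2 * ε) := by
      have hk := mul_le_mul_of_nonneg_left hdd (by positivity : (0:ℝ) ≤ α ^ 2 / 2)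
      have e1 : α ^ 2 / 2 * (η j * (G j - g j) ^ 2) = α ^ 2 * (η j * (G j - g j) ^ 2) / 2 := by ring
      have e2 : α ^ 2 / 2 * ((1/ε) * (G j - g j) ^ 2) = α ^ 2 * (G j - g j) ^ 2 / (2 * ε) := by ring
      linarith
    have hexpand : g j * η j * G j = (g j) ^ 2 * η j + g j * η j * (G j - g j) := by ring
    nlinarith [hy, hdd2]
  have hsum : ∑ j, ((g j) ^ 2 * η j - (g j) ^ 2 * η j / (2 * α ^ 2)
      - α ^ 2 * (G j - g j) ^ 2 / (2 * ε)) ≤ ∑ j, g j * η j * G j :=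
    Finset.sum_le_sum fun j _ => hcoord j
  have hsplit : ∑ j, ((g j) ^ 2 * η j - (g j) ^ 2 * η j / (2 * α ^ 2)
      - α ^ 2 * (G j - g j) ^ 2 / (2 * ε))
      = A - A / (2 * α ^ 2) - α ^ 2 / (2 * ε) * ‖G - g‖ ^ 2 := by
    rw [hA, hD2, Finset.sum_sub_distrib, Finset.sum_sub_distrib, ← Finset.sum_div,
      Finset.mul_sum]
    congr 1
    exact Finset.sum_congr rfl fun j _ => by ring
  have hS : A - A / (2 * α ^ 2) - α ^ 2 / (2 * ε) * (L ^ 2 * ρ ^ 2) ≤ ∑ j, g j * η j * G j := by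
    have h3 : α ^ 2 / (2 * ε) * ‖G - g‖ ^ 2 ≤ α ^ 2 / (2 * ε) * (L ^ 2 * ρ ^ 2) :=
      mul_le_mul_of_nonneg_left hGg2 (by positivity)
    rw [hsplit] at hsum
    linarith
  have hfin : ∑ j, -(γ * (g j * η j * G j)) = -γ * ∑ j, g j * η j * G j := by
    rw [Finset.mul_sum]
    exact Finset.sum_congr rfl fun j _ => by ring
  rw [hfin]
  have hmul := mul_le_mul_of_nonneg_left hS hγ
  have hring : -(γ * (A - A / (2 * α ^ 2) - α ^ 2 / (2 * ε) * (L ^ 2 * ρ ^ 2)))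
      = -γ * A + γ / (2 * α ^ 2) * A + γ * α ^ 2 * L ^ 2 * ρ ^ 2 / (2 * ε) := by ring
  linarith
end

section
/- Let B be a nonempty finite index set of cardinality b and let f_i : ℝ^d → ℝ (i ∈ B) be differentiable with L-Lipschitz gradients (L ≥ 0) and ‖∇f_i(y)‖∞ ≤ G for all y ∈ ℝ^d; let f : ℝ^d → ℝ be differentiable, and let x, s ∈ ℝ^d with s ≠ 0 satisfy ‖(1/b) Σ_{i∈B} ∇f_i(x) − ∇f(x)‖² ≤ σ²/b for some σ ≥ 0. Let β₁ ∈ [0,1), γ ∈ ℝ, ρ ≥ 0, ε > 0, β > 0, let m ∈ ℝ^d with ‖m‖∞ ≤ G, let η_prev ∈ ℝ^d with 0 ≤ (η_prev)_j ≤ 1/ε for every coordinate j, and let η ∈ ℝ^d be arbitrary. Set g = (1/b) Σ_{i∈B} ∇f_i(x + ρ s/‖s‖) and Δ = (γ β₁/(1 − β₁)) m ⊙ (η_prev − η) − γ (g ⊙ η). Then (L/2) ‖Δ‖² ≤ (L G² γ² β₁²/(1 − β₁)²) ‖η − η_prev‖² + γ² L [ (3(1 + β)/(β ε)) (‖∇f(x)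 ⊙ √η_prev‖² + L²ρ²/ε + σ²/(bε)) + (1 + β) G² ‖η − η_prev‖² ]. -/
lemma had_apply {d : ℕ} (x y : EuclideanSpace ℝ (Fin d)) (j : Fin d) :
    had x y j = x j * y j := rfl

lemma vsqrt_apply {d : ℕ} (x : EuclideanSpace ℝ (Fin d)) (j : Fin d) :
    vsqrt x j = Real.sqrt (x j) := rfl

lemma esum_apply {d : ℕ} {ι : Type*} (B : Finset ι) (w : ι → EuclideanSpace ℝ (Fin d))
    (j : Fin d) : (∑ i ∈ B, w i) j = ∑ i ∈ B, w i j := by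
  classical
  induction B using Finset.induction with
  | empty => simp
  | insert a s h ih => simp [Finset.sum_insert h, ih]

lemma sqnorm_eq {d : ℕ} (v : EuclideanSpace ℝ (Fin d)) : ‖v‖ ^ 2 = ∑ j, (v j) ^ 2 := by
  rw [EuclideanSpace.norm_eq, Real.sq_sqrt (by positivity)]
  simp [sq_abs]

lemma sqnorm_le {d : ℕ} {u v : EuclideanSpace ℝ (Fin d)} {c : ℝ}
    (h : ∀ j, (u j) ^ 2 ≤ c * (v j) ^ 2) : ‖u‖ ^ 2 ≤ c * ‖v‖ ^ 2 := by
  rw [sqnorm_eq, sqnorm_eq, Finset.mul_sum]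
  exact Finset.sum_le_sum fun j _ => h j

/-- bound via sup bound on the first factor -/
lemma had_sq_le_left {d : ℕ} {u v : EuclideanSpace ℝ (Fin d)} {c : ℝ}
    (hu : ∀ j, |u j| ≤ c) : ‖had u v‖ ^ 2 ≤ c ^ 2 * ‖v‖ ^ 2 := by
  refine sqnorm_le fun j => ?_
  have h1 : (u j) ^ 2 ≤ c ^ 2 := by
    have := pow_le_pow_left₀ (abs_nonneg (u j)) (hu j) 2
    simpa [sq_abs] using this
  have h2 := sq_nonneg (v j)
  rw [had_apply, mul_pow]
  nlinarith [mul_nonneg (sub_nonneg.mpr h1) h2]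

/-- bound via sup bound on the second factor -/
lemma had_sq_le_right {d : ℕ} {u v : EuclideanSpace ℝ (Fin d)} {c : ℝ}
    (hv : ∀ j, |v j| ≤ c) : ‖had u v‖ ^ 2 ≤ c ^ 2 * ‖u‖ ^ 2 := by
  refine sqnorm_le fun j => ?_
  have h1 : (v j) ^ 2 ≤ c ^ 2 := by
    have := pow_le_pow_left₀ (abs_nonneg (v j)) (hv j) 2
    simpa [sq_abs] using this
  have h2 := sq_nonneg (u j)
  rw [had_apply, mul_pow]
  nlinarith [mul_nonneg (sub_nonneg.mpr h1) h2]

lemma young_ineq (a b c : ℝ) (hc : 0 < c) :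
    (a + b) ^ 2 ≤ (1 + 1 / c) * a ^ 2 + (1 + c) * b ^ 2 := by
  have h : (1 + 1 / c) * a ^ 2 + (1 + c) * b ^ 2 - (a + b) ^ 2 = (1 / c) * (a - c * b) ^ 2 := by
    field_simp
    ring
  nlinarith [mul_nonneg (one_div_nonneg.mpr hc.le) (sq_nonneg (a - c * b))]

lemma sq_triple_le (x a1 a2 a3 t1 t2 t3 : ℝ) (hx : 0 ≤ x)
    (hn : x ≤ a1 + a2 + a3) (h1 : a1 ^ 2 ≤ t1) (h2 : a2 ^ 2 ≤ t2) (h3 : a3 ^ 2 ≤ t3)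
    (ha1 : 0 ≤ a1) (ha2 : 0 ≤ a2) (ha3 : 0 ≤ a3) :
    x ^ 2 ≤ 3 * (t1 + t2 + t3) := by
  have hx2 : x ^ 2 ≤ (a1 + a2 + a3) ^ 2 := pow_le_pow_left₀ hx hn 2
  nlinarith [sq_nonneg (a1 - a2), sq_nonneg (a2 - a3), sq_nonneg (a1 - a3)]

lemma sq_young_le (x a1 a2 t1 t2 c : ℝ) (hx : 0 ≤ x) (hc : 0 < c)
    (hn : x ≤ a1 + a2) (h1 : a1 ^ 2 ≤ t1) (h2 : a2 ^ 2 ≤ t2)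
    (ha1 : 0 ≤ a1) (ha2 : 0 ≤ a2) :
    x ^ 2 ≤ (1 + 1 / c) * t1 + (1 + c) * t2 := by
  have hx2 : x ^ 2 ≤ (a1 + a2) ^ 2 := pow_le_pow_left₀ hx hn 2
  have hy := young_ineq a1 a2 c hc
  have hc1 : (0 : ℝ) ≤ 1 + 1 / c := by positivity
  have hc2 : (0 : ℝ) ≤ 1 + c := by positivity
  nlinarith [mul_le_mul_of_nonneg_left h1 hc1, mul_le_mul_of_nonneg_left h2 hc2]

lemma sq_two_le (x a1 a2 : ℝ) (hx : 0 ≤ x) (hn : x ≤ a1 + a2) :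
    x ^ 2 ≤ 2 * a1 ^ 2 + 2 * a2 ^ 2 := by
  have hx2 : x ^ 2 ≤ (a1 + a2) ^ 2 := pow_le_pow_left₀ hx hn 2
  nlinarith [sq_nonneg (a1 - a2)]

set_option maxHeartbeats 2000000 in
/-- Bound on the squared displacement of the auxiliary sequence in the AdaSAM analysis:
with `g = (1/b) Σ_{i∈B} ∇f_i(x + ρs/‖s‖)` and
`Δ = (γβ₁/(1−β₁)) m ⊙ (η_prev − η) − γ (g ⊙ η)`,
`(L/2)‖Δ‖² ≤ (LG²γ²β₁²/(1−β₁)²)‖η − η_prev‖²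
  + γ²L[(3(1+β)/(βε))(‖∇f(x) ⊙ √η_prev‖² + L²ρ²/ε + σ²/(bε)) + (1+β)G²‖η − η_prev‖²]`. -/
theorem adasam_displacement_bound {d : ℕ} (hd : 1 ≤ d) {ι : Type*}
    (B : Finset ι) (hB : B.Nonempty) (b : ℕ) (hb : b = B.card)
    (f : EuclideanSpace ℝ (Fin d) → ℝ) (fi : ι → EuclideanSpace ℝ (Fin d) → ℝ)
    (L G σ β₁ γ ρ ε β : ℝ)
    (hf : Differentiable ℝ f)
    (hfi : ∀ i ∈ B, Differentiable ℝ (fi i))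
    (hL : 0 ≤ L)
    (hfiL : ∀ i ∈ B, ∀ u v, ‖gradient (fi i) u - gradient (fi i) v‖ ≤ L * ‖u - v‖)
    (hfiG : ∀ i ∈ B, ∀ y, ∀ j, |gradient (fi i) y j| ≤ G)
    (x s : EuclideanSpace ℝ (Fin d)) (hs : s ≠ 0)
    (hσ : 0 ≤ σ)
    (hvar : ‖(1 / (b : ℝ)) • ∑ i ∈ B, gradient (fi i) x - gradient f x‖ ^ 2 ≤ σ ^ 2 / b)
    (hβ₁ : β₁ ∈ Set.Ico (0 : ℝ) 1) (hρ : 0 ≤ ρ) (hε : 0 < ε) (hβ : 0 < β)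
    (m : EuclideanSpace ℝ (Fin d)) (hm : ∀ j, |m j| ≤ G)
    (ηprev : EuclideanSpace ℝ (Fin d)) (hηprev : ∀ j, 0 ≤ ηprev j ∧ ηprev j ≤ 1 / ε)
    (η : EuclideanSpace ℝ (Fin d)) :
    let g : EuclideanSpace ℝ (Fin d) :=
      (1 / (b : ℝ)) • ∑ i ∈ B, gradient (fi i) (x + (ρ / ‖s‖) • s)
    let Δ : EuclideanSpace ℝ (Fin d) :=
      (γ * β₁ / (1 - β₁)) • had m (ηprev - η) - γ • had g η
    (L / 2) * ‖Δ‖ ^ 2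
      ≤ (L * G ^ 2 * γ ^ 2 * β₁ ^ 2 / (1 - β₁) ^ 2) * ‖η - ηprev‖ ^ 2
        + γ ^ 2 * L * ((3 * (1 + β) / (β * ε))
            * (‖had (gradient f x) (vsqrt ηprev)‖ ^ 2 + L ^ 2 * ρ ^ 2 / ε
                + σ ^ 2 / ((b : ℝ) * ε))
          + (1 + β) * G ^ 2 * ‖η - ηprev‖ ^ 2) := by
  intro g Δ
  have hgdef : g = (1 / (b : ℝ)) • ∑ i ∈ B, gradient (fi i) (x + (ρ / ‖s‖) • s) := rfl
  have hΔdef : Δ = (γ * β₁ / (1 - β₁)) • had m (ηprev - η) - γ • had g η := rfl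
  clear_value Δ g
  obtain ⟨hβ₁0, hβ₁1⟩ := hβ₁
  have h1β : (0 : ℝ) < 1 - β₁ := by linarith
  have hbpos : (0 : ℝ) < (b : ℝ) := by
    have : 0 < B.card := Finset.card_pos.mpr hB
    exact_mod_cast hb ▸ this
  have hG : 0 ≤ G := le_trans (abs_nonneg _) (hm ⟨0, hd⟩)
  set y : EuclideanSpace ℝ (Fin d) := x + (ρ / ‖s‖) • s with hy
  set gav : EuclideanSpace ℝ (Fin d) := (1 / (b : ℝ)) • ∑ i ∈ B, gradient (fi i) x with hgav
  -- coordinate bound on g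
  have hgj : ∀ j, |g j| ≤ G := by
    intro j
    have hgje : g j = (1 / (b : ℝ)) * ∑ i ∈ B, gradient (fi i) y j := by
      rw [hgdef]
      show (1 / (b : ℝ)) • (∑ i ∈ B, gradient (fi i) y) j = _
      rw [esum_apply, smul_eq_mul]
    rw [hgje, abs_mul, abs_of_nonneg (by positivity : (0:ℝ) ≤ 1 / (b:ℝ))]
    calc (1 / (b : ℝ)) * |∑ i ∈ B, gradient (fi i) y j|
        ≤ (1 / (b : ℝ)) * ∑ i ∈ B, |gradient (fi i) y j| := by
          gcongr
          exact Finset.abs_sum_le_sum_abs _ _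
      _ ≤ (1 / (b : ℝ)) * ∑ i ∈ B, G := by
          gcongr with i hi
          exact hfiG i hi y j
      _ = G := by
          rw [Finset.sum_const, nsmul_eq_mul, ← hb]
          field_simp
  -- sqrt coordinate bound
  have hsqrtb : ∀ j, |vsqrt ηprev j| ≤ Real.sqrt (1 / ε) := by
    intro j
    rw [vsqrt_apply, abs_of_nonneg (Real.sqrt_nonneg _)]
    exact Real.sqrt_le_sqrt (hηprev j).2
  have hsqrtsq : Real.sqrt (1 / ε) ^ 2 = 1 / ε := Real.sq_sqrt (by positivity)
  -- (5) ‖g - gav‖ ≤ L ρ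
  have hsn : (0 : ℝ) < ‖s‖ := norm_pos_iff.mpr hs
  have hyx : ‖y - x‖ = ρ := by
    rw [hy, add_sub_cancel_left, norm_smul, Real.norm_eq_abs,
      abs_of_nonneg (div_nonneg hρ hsn.le), div_mul_cancel₀ _ hsn.ne']
  have h5 : ‖g - gav‖ ≤ L * ρ := by
    have hdiff : g - gav = (1 / (b : ℝ)) • ∑ i ∈ B, (gradient (fi i) y - gradient (fi i) x) := by
      rw [hgdef, hgav, Finset.sum_sub_distrib, smul_sub]
    rw [hdiff, norm_smul, Real.norm_eq_abs, abs_of_nonneg (by positivity : (0:ℝ) ≤ 1 / (b:ℝ))]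
    calc (1 / (b : ℝ)) * ‖∑ i ∈ B, (gradient (fi i) y - gradient (fi i) x)‖
        ≤ (1 / (b : ℝ)) * ∑ i ∈ B, ‖gradient (fi i) y - gradient (fi i) x‖ := by
          gcongr
          exact norm_sum_le _ _
      _ ≤ (1 / (b : ℝ)) * ∑ i ∈ B, (L * ρ) := by
          gcongr with i hi
          simpa [hyx] using hfiL i hi y x
      _ = L * ρ := by
          rw [Finset.sum_const, nsmul_eq_mul, ← hb]
          field_simp
  have h5sq : ‖g - gav‖ ^ 2 ≤ L ^ 2 * ρ ^ 2 := by
    have := pow_le_pow_left₀ (norm_nonneg _) h5 2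
    calc ‖g - gav‖ ^ 2 ≤ (L * ρ) ^ 2 := this
      _ = L ^ 2 * ρ ^ 2 := by ring
  -- (6) variance
  have h6 : ‖gav - gradient f x‖ ^ 2 ≤ σ ^ 2 / b := hvar
  -- Notation for main quantities
  set N := ‖η - ηprev‖ with hN
  set T1 := ‖had (gradient f x) (vsqrt ηprev)‖ ^ 2 with hT1
  -- A-part
  have hAm : ‖had m (ηprev - η)‖ ^ 2 ≤ G ^ 2 * N ^ 2 := by
    have := had_sq_le_left (v := ηprev - η) hm
    rwa [norm_sub_rev, ← hN] at this
  -- triple decomposition of had g (vsqrt ηprev)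
  have hdec3 : had g (vsqrt ηprev)
      = had (gradient f x) (vsqrt ηprev) + had (gav - gradient f x) (vsqrt ηprev)
        + had (g - gav) (vsqrt ηprev) := by
    ext j
    simp only [had_apply, PiLp.add_apply, PiLp.sub_apply]
    ring
  have hhalf : ∀ w : EuclideanSpace ℝ (Fin d),
      ‖had w (vsqrt ηprev)‖ ^ 2 ≤ (1 / ε) * ‖w‖ ^ 2 := by
    intro w
    have := had_sq_le_right (u := w) hsqrtb
    rwa [hsqrtsq] at this
  have htriple : ‖had g (vsqrt ηprev)‖ ^ 2
      ≤ 3 * (T1 + (1 / ε) * (σ ^ 2 / b) + (1 / ε) * (L ^ 2 * ρ ^ 2)) := by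
    rw [hdec3]
    refine sq_triple_le _ _ _ _ _ _ _ (norm_nonneg _) norm_add₃_le le_rfl
      ((hhalf (gav - gradient f x)).trans
        (mul_le_mul_of_nonneg_left h6 (by positivity)))
      ((hhalf (g - gav)).trans
        (mul_le_mul_of_nonneg_left h5sq (by positivity)))
      (norm_nonneg _) (norm_nonneg _) (norm_nonneg _)
  -- ‖had g ηprev‖² ≤ (1/ε) ‖had g √ηprev‖²
  have hprevb : ‖had g ηprev‖ ^ 2 ≤ (1 / ε) * ‖had g (vsqrt ηprev)‖ ^ 2 := by
    refine sqnorm_le fun j => ?_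
    obtain ⟨h0, h1⟩ := hηprev j
    rw [had_apply, had_apply, vsqrt_apply, mul_pow, mul_pow, Real.sq_sqrt h0]
    nlinarith [sq_nonneg (g j), mul_nonneg (mul_nonneg (sq_nonneg (g j)) h0)
      (sub_nonneg.mpr h1)]
  -- decomposition of had g η
  have hdec2 : had g η = had g ηprev + had g (η - ηprev) := by
    ext j
    simp only [had_apply, PiLp.add_apply, PiLp.sub_apply]
    ring
  have hBd : ‖had g (η - ηprev)‖ ^ 2 ≤ G ^ 2 * N ^ 2 := by
    have := had_sq_le_left (v := η - ηprev) hgj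
    rwa [← hN] at this
  -- key bound on ‖had g η‖²
  have hkey : ‖had g η‖ ^ 2
      ≤ (1 + 1 / β) * ((1 / ε) * (3 * (T1 + (1 / ε) * (σ ^ 2 / b) + (1 / ε) * (L ^ 2 * ρ ^ 2))))
        + (1 + β) * (G ^ 2 * N ^ 2) := by
    rw [hdec2]
    exact sq_young_le _ _ _ _ _ β (norm_nonneg _) hβ (norm_add_le _ _)
      (hprevb.trans (mul_le_mul_of_nonneg_left htriple (by positivity))) hBd
      (norm_nonneg _) (norm_nonneg _)
  -- Δ bound
  have hΔ : ‖Δ‖ ^ 2 ≤ 2 * ‖(γ * β₁ / (1 - β₁)) • had m (ηprev - η)‖ ^ 2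
      + 2 * ‖γ • had g η‖ ^ 2 := by
    rw [hΔdef]
    exact sq_two_le _ _ _ (norm_nonneg _) (norm_sub_le _ _)
  have hAsm : ‖(γ * β₁ / (1 - β₁)) • had m (ηprev - η)‖ ^ 2
      = (γ * β₁ / (1 - β₁)) ^ 2 * ‖had m (ηprev - η)‖ ^ 2 := by
    rw [norm_smul, mul_pow, Real.norm_eq_abs, sq_abs]
  have hBsm : ‖γ • had g η‖ ^ 2 = γ ^ 2 * ‖had g η‖ ^ 2 := by
    rw [norm_smul, mul_pow, Real.norm_eq_abs, sq_abs]
  -- final assembly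
  have hfact : (1 + 1 / β) * ((1 / ε) * 3) = 3 * (1 + β) / (β * ε) := by
    field_simp
    ring
  have hA2 : (γ * β₁ / (1 - β₁)) ^ 2 * ‖had m (ηprev - η)‖ ^ 2
      ≤ γ ^ 2 * β₁ ^ 2 / (1 - β₁) ^ 2 * (G ^ 2 * N ^ 2) := by
    calc (γ * β₁ / (1 - β₁)) ^ 2 * ‖had m (ηprev - η)‖ ^ 2
        ≤ (γ * β₁ / (1 - β₁)) ^ 2 * (G ^ 2 * N ^ 2) :=
          mul_le_mul_of_nonneg_left hAm (sq_nonneg _)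
      _ = γ ^ 2 * β₁ ^ 2 / (1 - β₁) ^ 2 * (G ^ 2 * N ^ 2) := by
          rw [div_pow, mul_pow]
  have hRHSrw : (3 * (1 + β) / (β * ε)) * (T1 + L ^ 2 * ρ ^ 2 / ε + σ ^ 2 / ((b : ℝ) * ε))
      = (1 + 1 / β) * ((1 / ε) * (3 * (T1 + (1 / ε) * (σ ^ 2 / b) + (1 / ε) * (L ^ 2 * ρ ^ 2)))) := by
    rw [← hfact]
    field_simp
    ring
  have hgη : γ ^ 2 * ‖had g η‖ ^ 2
      ≤ γ ^ 2 * ((3 * (1 + β) / (β * ε)) * (T1 + L ^ 2 * ρ ^ 2 / ε + σ ^ 2 / ((b : ℝ) * ε))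
        + (1 + β) * G ^ 2 * N ^ 2) := by
    rw [hRHSrw]
    calc γ ^ 2 * ‖had g η‖ ^ 2
        ≤ γ ^ 2 * ((1 + 1 / β) * ((1 / ε) * (3 * (T1 + (1 / ε) * (σ ^ 2 / b)
            + (1 / ε) * (L ^ 2 * ρ ^ 2)))) + (1 + β) * (G ^ 2 * N ^ 2)) := by gcongr
      _ = γ ^ 2 * ((1 + 1 / β) * ((1 / ε) * (3 * (T1 + (1 / ε) * (σ ^ 2 / b)
            + (1 / ε) * (L ^ 2 * ρ ^ 2)))) + (1 + β) * G ^ 2 * N ^ 2) := by ring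
  calc (L / 2) * ‖Δ‖ ^ 2
      ≤ (L / 2) * (2 * ‖(γ * β₁ / (1 - β₁)) • had m (ηprev - η)‖ ^ 2
          + 2 * ‖γ • had g η‖ ^ 2) := by gcongr
    _ = L * ((γ * β₁ / (1 - β₁)) ^ 2 * ‖had m (ηprev - η)‖ ^ 2)
        + L * (γ ^ 2 * ‖had g η‖ ^ 2) := by rw [hAsm, hBsm]; ring
    _ ≤ L * (γ ^ 2 * β₁ ^ 2 / (1 - β₁) ^ 2 * (G ^ 2 * N ^ 2))
        + L * (γ ^ 2 * ((3 * (1 + β) / (β * ε)) * (T1 + L ^ 2 * ρ ^ 2 / ε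
            + σ ^ 2 / ((b : ℝ) * ε)) + (1 + β) * G ^ 2 * N ^ 2)) := by gcongr
    _ = (L * G ^ 2 * γ ^ 2 * β₁ ^ 2 / (1 - β₁) ^ 2) * N ^ 2
        + γ ^ 2 * L * ((3 * (1 + β) / (β * ε)) * (T1 + L ^ 2 * ρ ^ 2 / ε
            + σ ^ 2 / ((b : ℝ) * ε)) + (1 + β) * G ^ 2 * N ^ 2) := by ring
end
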